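/- (Blindness of score matching to mixing proportions.) Fix μ₁ < μ₂ ∈ ℝ and two mixing proportions π, π' ∈ (0,1) with π ≠ π'. Writing p_{σ,π}(x) = π φ_{μ₁,σ}(x) + (1−π) φ_{μ₂,σ}(x), the Fisher divergence between the two mixtures that differ only in their mixing proportion vanishes: J(p_{σ,π} ‖ p_{σ,π'}) → 0 as σ → 0⁺. -/

import Mathlib

open MeasureTheory Filter

/-- Gaussian density with mean `μ` and standard deviation `σ`. -/
noncomputable def gaussian (μ σ : ℝ) (x : ℝ) : ℝ :=
  (σ * Real.sqrt (2 * Real.pi))⁻¹ * Real.exp (-(x - μ) ^ 2 / (2 * σ ^ 2))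

/-- The score of a density `ρ`: the derivative of its log. -/
noncomputable def score (ρ : ℝ → ℝ) (x : ℝ) : ℝ :=
  deriv (fun y => Real.log (ρ y)) x

/-- Fisher divergence between densities `q` and `p`. -/
noncomputable def fisherDiv (q p : ℝ → ℝ) : ℝ :=
  ∫ x : ℝ, q x * (score q x - score p x) ^ 2

/-! ### Auxiliary lemmas -/

lemma gaussian_pos (μ : ℝ) {σ : ℝ} (hσ : 0 < σ) (x : ℝ) : 0 < gaussian μ σ x := by
  unfold gaussian
  positivity

lemma hasDerivAt_gaussian (μ : ℝ) {σ : ℝ} (hσ : σ ≠ 0) (x : ℝ) :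
    HasDerivAt (gaussian μ σ) (gaussian μ σ x * (-(x - μ) / σ ^ 2)) x := by
  have h1 : HasDerivAt (fun y : ℝ => -(y - μ) ^ 2 / (2 * σ ^ 2))
      (-(x - μ) / σ ^ 2) x := by
    have : HasDerivAt (fun y : ℝ => -(y - μ) ^ 2 / (2 * σ ^ 2))
        (-(2 * (x - μ) ^ 1 * 1) / (2 * σ ^ 2)) x :=
      (((hasDerivAt_id x).sub_const μ).pow 2).neg.div_const _
    convert this using 1
    field_simp
  have := ((h1.exp).const_mul ((σ * Real.sqrt (2 * Real.pi))⁻¹))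
  refine this.congr_deriv ?_
  unfold gaussian
  ring

lemma score_mix (a μ₁ μ₂ : ℝ) {σ : ℝ} (hσ : 0 < σ) (ha : 0 < a) (ha' : a < 1) (x : ℝ) :
    score (fun y => a * gaussian μ₁ σ y + (1 - a) * gaussian μ₂ σ y) x =
      (a * gaussian μ₁ σ x * (-(x - μ₁) / σ ^ 2)
        + (1 - a) * gaussian μ₂ σ x * (-(x - μ₂) / σ ^ 2)) /
      (a * gaussian μ₁ σ x + (1 - a) * gaussian μ₂ σ x) := by
  have hqx : 0 < a * gaussian μ₁ σ x + (1 - a) * gaussian μ₂ σ x := by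
    have := gaussian_pos μ₁ hσ x
    have := gaussian_pos μ₂ hσ x
    nlinarith
  have hq : HasDerivAt (fun y => a * gaussian μ₁ σ y + (1 - a) * gaussian μ₂ σ y)
      (a * (gaussian μ₁ σ x * (-(x - μ₁) / σ ^ 2))
        + (1 - a) * (gaussian μ₂ σ x * (-(x - μ₂) / σ ^ 2))) x :=
    ((hasDerivAt_gaussian μ₁ hσ.ne' x).const_mul a).add
      ((hasDerivAt_gaussian μ₂ hσ.ne' x).const_mul (1 - a))
  have := (hq.log hqx.ne').deriv
  rw [score, this]
  ring_nf

set_option maxHeartbeats 1000000 in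
lemma mix_bound (a b c g1 g2 q p : ℝ) (ha : 0 < a) (ha' : a < 1) (hb : 0 < b) (hb' : b < 1)
    (hg1 : 0 < g1) (hg2 : 0 < g2) (hq : 0 < q) (hp : 0 < p)
    (h1a : a * g1 ≤ q) (h2a : (1 - a) * g2 ≤ q) (h1b : b * g1 ≤ p) (h2b : (1 - b) * g2 ≤ p) :
    q * (c * (g1 * g2) / (q * p)) ^ 2
    ≤ c ^ 2 * max (a * b ^ 2)⁻¹ ((1 - a) * (1 - b) ^ 2)⁻¹ * Real.sqrt (g1 * g2) := by
  have ha2 : (0:ℝ) < 1 - a := by linarith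
  have hb2 : (0:ℝ) < 1 - b := by linarith
  have hmax : (0:ℝ) < max (a * b ^ 2)⁻¹ ((1 - a) * (1 - b) ^ 2)⁻¹ :=
    lt_max_of_lt_left (by positivity)
  have hLHS : q * (c * (g1 * g2) / (q * p)) ^ 2 = c ^ 2 * ((g1 * g2) ^ 2 / (q * p ^ 2)) := by
    field_simp
  rw [hLHS]
  rcases le_total g2 g1 with h | h
  · have hsq : (b * g1) ^ 2 ≤ p ^ 2 := pow_le_pow_left₀ (by positivity) h1b 2
    have hd : a * g1 * (b * g1) ^ 2 ≤ q * p ^ 2 :=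
      mul_le_mul h1a hsq (by positivity) hq.le
    have hstep : (g1 * g2) ^ 2 / (q * p ^ 2) ≤ (g1 * g2) ^ 2 / (a * g1 * (b * g1) ^ 2) :=
      div_le_div_of_nonneg_left (by positivity) (by positivity) hd
    have heq : (g1 * g2) ^ 2 / (a * g1 * (b * g1) ^ 2) = (a * b ^ 2)⁻¹ * (g2 ^ 2 / g1) := by
      have : a * b ^ 2 ≠ 0 := by positivity
      field_simp
    have hs : g2 ^ 2 / g1 ≤ Real.sqrt (g1 * g2) := by
      have h2' : g2 ≤ Real.sqrt (g1 * g2) := by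
        have := Real.sqrt_le_sqrt (show g2 * g2 ≤ g1 * g2 by nlinarith)
        rwa [Real.sqrt_mul_self hg2.le] at this
      rw [div_le_iff₀ hg1]
      nlinarith [Real.sqrt_nonneg (g1 * g2)]
    have hmul : (a * b ^ 2)⁻¹ * (g2 ^ 2 / g1)
        ≤ max (a * b ^ 2)⁻¹ ((1 - a) * (1 - b) ^ 2)⁻¹ * Real.sqrt (g1 * g2) :=
      mul_le_mul (le_max_left _ _) hs (by positivity) hmax.le
    calc c ^ 2 * ((g1 * g2) ^ 2 / (q * p ^ 2))
        ≤ c ^ 2 * ((a * b ^ 2)⁻¹ * (g2 ^ 2 / g1)) := by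
          rw [← heq]; exact mul_le_mul_of_nonneg_left hstep (by positivity)
      _ ≤ c ^ 2 * (max (a * b ^ 2)⁻¹ ((1 - a) * (1 - b) ^ 2)⁻¹ * Real.sqrt (g1 * g2)) :=
          mul_le_mul_of_nonneg_left hmul (by positivity)
      _ = c ^ 2 * max (a * b ^ 2)⁻¹ ((1 - a) * (1 - b) ^ 2)⁻¹ * Real.sqrt (g1 * g2) := by ring
  · have hsq : ((1 - b) * g2) ^ 2 ≤ p ^ 2 := pow_le_pow_left₀ (by positivity) h2b 2
    have hd : (1 - a) * g2 * ((1 - b) * g2) ^ 2 ≤ q * p ^ 2 :=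
      mul_le_mul h2a hsq (by positivity) hq.le
    have hstep : (g1 * g2) ^ 2 / (q * p ^ 2)
        ≤ (g1 * g2) ^ 2 / ((1 - a) * g2 * ((1 - b) * g2) ^ 2) :=
      div_le_div_of_nonneg_left (by positivity) (by positivity) hd
    have heq : (g1 * g2) ^ 2 / ((1 - a) * g2 * ((1 - b) * g2) ^ 2)
        = ((1 - a) * (1 - b) ^ 2)⁻¹ * (g1 ^ 2 / g2) := by
      have : (1 - a) * (1 - b) ^ 2 ≠ 0 := by positivity
      field_simp
    have hs : g1 ^ 2 / g2 ≤ Real.sqrt (g1 * g2) := by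
      have h2' : g1 ≤ Real.sqrt (g1 * g2) := by
        have := Real.sqrt_le_sqrt (show g1 * g1 ≤ g1 * g2 by nlinarith)
        rwa [Real.sqrt_mul_self hg1.le] at this
      rw [div_le_iff₀ hg2]
      nlinarith [Real.sqrt_nonneg (g1 * g2)]
    have hmul : ((1 - a) * (1 - b) ^ 2)⁻¹ * (g1 ^ 2 / g2)
        ≤ max (a * b ^ 2)⁻¹ ((1 - a) * (1 - b) ^ 2)⁻¹ * Real.sqrt (g1 * g2) :=
      mul_le_mul (le_max_right _ _) hs (by positivity) hmax.le
    calc c ^ 2 * ((g1 * g2) ^ 2 / (q * p ^ 2))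
        ≤ c ^ 2 * (((1 - a) * (1 - b) ^ 2)⁻¹ * (g1 ^ 2 / g2)) := by
          rw [← heq]; exact mul_le_mul_of_nonneg_left hstep (by positivity)
      _ ≤ c ^ 2 * (max (a * b ^ 2)⁻¹ ((1 - a) * (1 - b) ^ 2)⁻¹ * Real.sqrt (g1 * g2)) :=
          mul_le_mul_of_nonneg_left hmul (by positivity)
      _ = c ^ 2 * max (a * b ^ 2)⁻¹ ((1 - a) * (1 - b) ^ 2)⁻¹ * Real.sqrt (g1 * g2) := by ring

lemma sqrt_gaussian_mul (μ₁ μ₂ : ℝ) {σ : ℝ} (hσ : 0 < σ) (x : ℝ) :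
    Real.sqrt (gaussian μ₁ σ x * gaussian μ₂ σ x)
      = gaussian ((μ₁ + μ₂) / 2) σ x * Real.exp (-(μ₂ - μ₁) ^ 2 / (8 * σ ^ 2)) := by
  have hσ2 : (σ:ℝ) ^ 2 ≠ 0 := by positivity
  have e1 : gaussian μ₁ σ x * gaussian μ₂ σ x
      = ((σ * Real.sqrt (2 * Real.pi))⁻¹) ^ 2
        * Real.exp (-(x - μ₁) ^ 2 / (2 * σ ^ 2) + -(x - μ₂) ^ 2 / (2 * σ ^ 2)) := by
    unfold gaussian
    rw [Real.exp_add]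
    ring
  have e2 : (gaussian ((μ₁ + μ₂) / 2) σ x * Real.exp (-(μ₂ - μ₁) ^ 2 / (8 * σ ^ 2))) ^ 2
      = ((σ * Real.sqrt (2 * Real.pi))⁻¹) ^ 2
        * Real.exp ((-(x - (μ₁ + μ₂) / 2) ^ 2 / (2 * σ ^ 2) + -(μ₂ - μ₁) ^ 2 / (8 * σ ^ 2))
            + (-(x - (μ₁ + μ₂) / 2) ^ 2 / (2 * σ ^ 2) + -(μ₂ - μ₁) ^ 2 / (8 * σ ^ 2))) := by
    unfold gaussian
    rw [Real.exp_add, Real.exp_add]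
    ring
  have key : gaussian μ₁ σ x * gaussian μ₂ σ x
      = (gaussian ((μ₁ + μ₂) / 2) σ x * Real.exp (-(μ₂ - μ₁) ^ 2 / (8 * σ ^ 2))) ^ 2 := by
    rw [e1, e2]
    congr 1
    field_simp
    ring
  rw [key]
  apply Real.sqrt_sq
  have : 0 < gaussian ((μ₁ + μ₂) / 2) σ x := gaussian_pos _ hσ x
  positivity

lemma gaussian_eq_pdf (μ : ℝ) {σ : ℝ} (hσ : 0 < σ) :
    gaussian μ σ = ProbabilityTheory.gaussianPDFReal μ (Real.toNNReal (σ ^ 2)) := by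
  funext x
  unfold gaussian ProbabilityTheory.gaussianPDFReal
  rw [Real.coe_toNNReal _ (sq_nonneg σ), Real.sqrt_mul (by positivity) (σ ^ 2),
    Real.sqrt_sq hσ.le]
  ring_nf

lemma integrable_gaussian (μ : ℝ) {σ : ℝ} (hσ : 0 < σ) : Integrable (gaussian μ σ) := by
  rw [gaussian_eq_pdf μ hσ]
  exact ProbabilityTheory.integrable_gaussianPDFReal μ _

lemma integral_gaussian_one (μ : ℝ) {σ : ℝ} (hσ : 0 < σ) : ∫ x, gaussian μ σ x = 1 := by
  rw [gaussian_eq_pdf μ hσ]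
  exact ProbabilityTheory.integral_gaussianPDFReal_eq_one μ
    (by simp [Real.toNNReal_eq_zero]; nlinarith)

lemma continuous_gaussian (μ σ : ℝ) : Continuous (gaussian μ σ) := by
  unfold gaussian
  fun_prop

lemma tendsto_aux (C c : ℝ) (hc : 0 < c) :
    Tendsto (fun σ : ℝ => C * ((σ ^ 2)⁻¹ ^ 2 * Real.exp (-(c * (σ ^ 2)⁻¹))))
      (nhdsWithin 0 (Set.Ioi 0)) (nhds 0) := by
  have h1 : Tendsto (fun t : ℝ => t ^ 2 * Real.exp (-t)) atTop (nhds 0) :=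
    Real.tendsto_pow_mul_exp_neg_atTop_nhds_zero 2
  have hmul : Tendsto (fun s : ℝ => c * s) atTop atTop :=
    Tendsto.const_mul_atTop hc tendsto_id
  have h2 : Tendsto (fun s : ℝ => (c * s) ^ 2 * Real.exp (-(c * s))) atTop (nhds 0) :=
    h1.comp hmul
  have hsq : Tendsto (fun σ : ℝ => (σ ^ 2)⁻¹) (nhdsWithin 0 (Set.Ioi 0)) atTop := by
    apply tendsto_inv_nhdsGT_zero.comp
    apply tendsto_nhdsWithin_of_tendsto_nhds_of_eventually_within
    · have : Tendsto (fun σ : ℝ => σ ^ 2) (nhds 0) (nhds 0) := by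
        have := (continuous_pow 2).tendsto (0 : ℝ)
        simpa using this
      exact this.mono_left nhdsWithin_le_nhds
    · filter_upwards [self_mem_nhdsWithin] with σ hσ
      exact pow_pos (Set.mem_Ioi.mp hσ) 2
  have h3 := (h2.comp hsq).const_mul (C / c ^ 2)
  rw [mul_zero] at h3
  apply h3.congr
  intro σ
  simp only [Function.comp_apply]
  rw [div_mul_eq_mul_div, div_eq_iff (by positivity : (c:ℝ) ^ 2 ≠ 0)]
  ring

/-- blindness of score matching to mixing proportions, small-variance
limit: the Fisher divergence between two mixtures that differ only in their mixing
proportion vanishes as `σ → 0⁺`. -/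
theorem fisher_blind_to_proportions_small_variance (μ₁ μ₂ w w' : ℝ) (hμ : μ₁ < μ₂)
    (hw : w ∈ Set.Ioo (0 : ℝ) 1) (hw' : w' ∈ Set.Ioo (0 : ℝ) 1) (hne : w ≠ w') :
    Tendsto
      (fun σ => fisherDiv
        (fun y => w * gaussian μ₁ σ y + (1 - w) * gaussian μ₂ σ y)
        (fun y => w' * gaussian μ₁ σ y + (1 - w') * gaussian μ₂ σ y))
      (nhdsWithin 0 (Set.Ioi 0)) (nhds 0) := by
  obtain ⟨hw0, hw1⟩ := hw
  obtain ⟨hw0', hw1'⟩ := hw'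
  have hc : (0:ℝ) < (μ₂ - μ₁) ^ 2 / 8 := by
    have h : (0:ℝ) < μ₂ - μ₁ := by linarith
    positivity
  refine tendsto_of_tendsto_of_tendsto_of_le_of_le' tendsto_const_nhds
    (tendsto_aux ((w - w') ^ 2 * (μ₁ - μ₂) ^ 2 * max (w * w' ^ 2)⁻¹ ((1 - w) * (1 - w') ^ 2)⁻¹)
      ((μ₂ - μ₁) ^ 2 / 8) hc) ?_ ?_
  · -- 0 ≤ fisherDiv
    filter_upwards [self_mem_nhdsWithin] with σ hσ
    rw [Set.mem_Ioi] at hσ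
    simp only [fisherDiv]
    apply integral_nonneg
    intro x
    have h1 := gaussian_pos μ₁ hσ x
    have h2 := gaussian_pos μ₂ hσ x
    have : 0 ≤ w * gaussian μ₁ σ x + (1 - w) * gaussian μ₂ σ x := by nlinarith
    exact mul_nonneg this (sq_nonneg _)
  · -- fisherDiv ≤ bound
    filter_upwards [self_mem_nhdsWithin] with σ hσ
    rw [Set.mem_Ioi] at hσ
    have hg1 : ∀ x, 0 < gaussian μ₁ σ x := gaussian_pos μ₁ hσ
    have hg2 : ∀ x, 0 < gaussian μ₂ σ x := gaussian_pos μ₂ hσ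
    have hqpos : ∀ x, 0 < w * gaussian μ₁ σ x + (1 - w) * gaussian μ₂ σ x := fun x => by
      nlinarith [hg1 x, hg2 x]
    have hppos : ∀ x, 0 < w' * gaussian μ₁ σ x + (1 - w') * gaussian μ₂ σ x := fun x => by
      nlinarith [hg1 x, hg2 x]
    have hdiff : ∀ x,
        score (fun y => w * gaussian μ₁ σ y + (1 - w) * gaussian μ₂ σ y) x
          - score (fun y => w' * gaussian μ₁ σ y + (1 - w') * gaussian μ₂ σ y) x
        = (w - w') * (μ₁ - μ₂) / σ ^ 2 * (gaussian μ₁ σ x * gaussian μ₂ σ x)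
            / ((w * gaussian μ₁ σ x + (1 - w) * gaussian μ₂ σ x)
              * (w' * gaussian μ₁ σ x + (1 - w') * gaussian μ₂ σ x)) := by
      intro x
      rw [score_mix w μ₁ μ₂ hσ hw0 hw1 x, score_mix w' μ₁ μ₂ hσ hw0' hw1' x]
      have hq := (hqpos x).ne'
      have hp := (hppos x).ne'
      have hσ0 := hσ.ne'
      rw [div_sub_div _ _ hq hp]
      congr 1
      ring
    have hrw : fisherDiv
        (fun y => w * gaussian μ₁ σ y + (1 - w) * gaussian μ₂ σ y)
        (fun y => w' * gaussian μ₁ σ y + (1 - w') * gaussian μ₂ σ y)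
        = ∫ x, (w * gaussian μ₁ σ x + (1 - w) * gaussian μ₂ σ x)
            * ((w - w') * (μ₁ - μ₂) / σ ^ 2 * (gaussian μ₁ σ x * gaussian μ₂ σ x)
              / ((w * gaussian μ₁ σ x + (1 - w) * gaussian μ₂ σ x)
                * (w' * gaussian μ₁ σ x + (1 - w') * gaussian μ₂ σ x))) ^ 2 := by
      simp only [fisherDiv]
      congr 1
      funext x
      rw [hdiff x]
    have hbd : ∀ x,
        (w * gaussian μ₁ σ x + (1 - w) * gaussian μ₂ σ x)
            * ((w - w') * (μ₁ - μ₂) / σ ^ 2 * (gaussian μ₁ σ x * gaussian μ₂ σ x)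
              / ((w * gaussian μ₁ σ x + (1 - w) * gaussian μ₂ σ x)
                * (w' * gaussian μ₁ σ x + (1 - w') * gaussian μ₂ σ x))) ^ 2
        ≤ ((w - w') ^ 2 * (μ₁ - μ₂) ^ 2 * max (w * w' ^ 2)⁻¹ ((1 - w) * (1 - w') ^ 2)⁻¹
            * ((σ ^ 2)⁻¹ ^ 2 * Real.exp (-((μ₂ - μ₁) ^ 2 / 8 * (σ ^ 2)⁻¹))))
            * gaussian ((μ₁ + μ₂) / 2) σ x := by
      intro x
      have hb := mix_bound w w' ((w - w') * (μ₁ - μ₂) / σ ^ 2)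
        (gaussian μ₁ σ x) (gaussian μ₂ σ x)
        (w * gaussian μ₁ σ x + (1 - w) * gaussian μ₂ σ x)
        (w' * gaussian μ₁ σ x + (1 - w') * gaussian μ₂ σ x)
        hw0 hw1 hw0' hw1' (hg1 x) (hg2 x) (hqpos x) (hppos x)
        (by nlinarith [hg2 x]) (by nlinarith [hg1 x])
        (by nlinarith [hg2 x]) (by nlinarith [hg1 x])
      rw [sqrt_gaussian_mul μ₁ μ₂ hσ x] at hb
      refine hb.trans (le_of_eq ?_)
      rw [show -(μ₂ - μ₁) ^ 2 / (8 * σ ^ 2) = -((μ₂ - μ₁) ^ 2 / 8 * (σ ^ 2)⁻¹) by ring]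
      ring
    have hcont : Continuous (fun x =>
        (w * gaussian μ₁ σ x + (1 - w) * gaussian μ₂ σ x)
          * ((w - w') * (μ₁ - μ₂) / σ ^ 2 * (gaussian μ₁ σ x * gaussian μ₂ σ x)
            / ((w * gaussian μ₁ σ x + (1 - w) * gaussian μ₂ σ x)
              * (w' * gaussian μ₁ σ x + (1 - w') * gaussian μ₂ σ x))) ^ 2) := by
      have hg1c := continuous_gaussian μ₁ σ
      have hg2c := continuous_gaussian μ₂ σ
      have hqc : Continuous (fun x => w * gaussian μ₁ σ x + (1 - w) * gaussian μ₂ σ x) :=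
        (continuous_const.mul hg1c).add (continuous_const.mul hg2c)
      have hpc : Continuous (fun x => w' * gaussian μ₁ σ x + (1 - w') * gaussian μ₂ σ x) :=
        (continuous_const.mul hg1c).add (continuous_const.mul hg2c)
      refine hqc.mul (Continuous.pow ?_ 2)
      exact Continuous.div (continuous_const.mul (hg1c.mul hg2c)) (hqc.mul hpc)
        (fun x => (mul_pos (hqpos x) (hppos x)).ne')
    have hBint : Integrable (fun x =>
        ((w - w') ^ 2 * (μ₁ - μ₂) ^ 2 * max (w * w' ^ 2)⁻¹ ((1 - w) * (1 - w') ^ 2)⁻¹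
          * ((σ ^ 2)⁻¹ ^ 2 * Real.exp (-((μ₂ - μ₁) ^ 2 / 8 * (σ ^ 2)⁻¹))))
          * gaussian ((μ₁ + μ₂) / 2) σ x) :=
      (integrable_gaussian _ hσ).const_mul _
    have hGnn : ∀ x, 0 ≤
        (w * gaussian μ₁ σ x + (1 - w) * gaussian μ₂ σ x)
          * ((w - w') * (μ₁ - μ₂) / σ ^ 2 * (gaussian μ₁ σ x * gaussian μ₂ σ x)
            / ((w * gaussian μ₁ σ x + (1 - w) * gaussian μ₂ σ x)
              * (w' * gaussian μ₁ σ x + (1 - w') * gaussian μ₂ σ x))) ^ 2 :=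
      fun x => mul_nonneg (hqpos x).le (sq_nonneg _)
    have hGint : Integrable (fun x =>
        (w * gaussian μ₁ σ x + (1 - w) * gaussian μ₂ σ x)
          * ((w - w') * (μ₁ - μ₂) / σ ^ 2 * (gaussian μ₁ σ x * gaussian μ₂ σ x)
            / ((w * gaussian μ₁ σ x + (1 - w) * gaussian μ₂ σ x)
              * (w' * gaussian μ₁ σ x + (1 - w') * gaussian μ₂ σ x))) ^ 2) := by
      refine hBint.mono' hcont.aestronglyMeasurable (ae_of_all _ fun x => ?_)
      rw [Real.norm_eq_abs, abs_of_nonneg (hGnn x)]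
      exact hbd x
    rw [hrw]
    refine (integral_mono hGint hBint hbd).trans (le_of_eq ?_)
    rw [integral_const_mul, integral_gaussian_one _ hσ, mul_one]
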